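/- The scalar Riccati ODE P'(t) = -2aP(t) + (b^2/r)P(t)^2 - q on [0,T] with terminal condition P(T) = f, where q, r, f > 0 and b ≠ 0, admits a unique solution P on [0,T], and P(t) > 0 for all t ∈ [0,T]. -/

import Mathlib

open Set

lemma riccati_algebra (a s k q u : ℝ) (hk : k ≠ 0) (hu : 1 - u ≠ 0)
    (hs2 : s ^ 2 = a ^ 2 + k * q) :
    -2 * a * (((a + s) / k - (a - s) / k * u) / (1 - u))
      + k * (((a + s) / k - (a - s) / k * u) / (1 - u)) ^ 2 - q
    = (-((a - s) / k * (2 * s * u)) * (1 - u)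
        - ((a + s) / k - (a - s) / k * u) * -(2 * s * u)) / (1 - u) ^ 2 := by
  have hq : q = (s ^ 2 - a ^ 2) / k := by rw [hs2]; field_simp; ring
  rw [hq]
  field_simp
  ring

/-- Backward uniqueness for the Riccati ODE via Grönwall's inequality. -/
lemma riccati_uniqueness (T a k q : ℝ) (hT : 0 < T) (P Q : ℝ → ℝ)
    (hP : ∀ t ∈ Icc 0 T,
        HasDerivWithinAt P (-2 * a * P t + k * (P t) ^ 2 - q) (Icc 0 T) t)
    (hQ : ∀ t ∈ Icc 0 T,
        HasDerivWithinAt Q (-2 * a * Q t + k * (Q t) ^ 2 - q) (Icc 0 T) t)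
    (hPQT : P T = Q T) : EqOn P Q (Icc 0 T) := by
  have hPc : ContinuousOn P (Icc 0 T) := fun x hx => (hP x hx).continuousWithinAt
  have hQc : ContinuousOn Q (Icc 0 T) := fun x hx => (hQ x hx).continuousWithinAt
  obtain ⟨C, hC⟩ := isCompact_Icc.exists_bound_of_continuousOn hPc
  obtain ⟨C', hC'⟩ := isCompact_Icc.exists_bound_of_continuousOn hQc
  set L : ℝ := 2 * |a| + |k| * (C + C') with hL
  set φ : ℝ → ℝ := fun τ => T - τ with hφ
  have hmaps : ∀ τ ∈ Icc (0:ℝ) T, φ τ ∈ Icc (0:ℝ) T := by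
    intro τ hτ
    exact ⟨by simp only [φ]; linarith [hτ.2], by simp only [φ]; linarith [hτ.1]⟩
  set g : ℝ → ℝ := fun τ => P (φ τ) - Q (φ τ) with hg
  set d : ℝ → ℝ := fun τ =>
      (-2 * a * Q (φ τ) + k * (Q (φ τ)) ^ 2 - q)
        - (-2 * a * P (φ τ) + k * (P (φ τ)) ^ 2 - q) with hd
  have hφc : Continuous φ := continuous_const.sub continuous_id
  have hgc : ContinuousOn g (Icc 0 T) :=
    (hPc.comp hφc.continuousOn hmaps).sub (hQc.comp hφc.continuousOn hmaps)
  have hg0 : ‖g 0‖ ≤ 0 := by simp [g, φ, hPQT]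
  have hderiv : ∀ τ ∈ Ico (0:ℝ) T, HasDerivWithinAt g (d τ) (Ici τ) τ := by
    intro τ hτ
    have hφτ : φ τ ∈ Icc (0:ℝ) T := hmaps τ ⟨hτ.1, hτ.2.le⟩
    have hφd : HasDerivWithinAt φ (-1) (Icc τ T) τ :=
      ((hasDerivAt_id τ).const_sub T).hasDerivWithinAt
    have hm : MapsTo φ (Icc τ T) (Icc 0 T) := by
      intro x hx
      exact ⟨by simp only [φ]; linarith [hx.2], by simp only [φ]; linarith [hx.1, hτ.1]⟩
    have h1 := (hP (φ τ) hφτ).comp τ hφd hm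
    have h2 := (hQ (φ τ) hφτ).comp τ hφd hm
    have h3 := h1.sub h2
    have h4 : HasDerivWithinAt g (d τ) (Icc τ T) τ := by
      exact h3.congr_deriv (by simp only [d]; ring)
    exact h4.mono_of_mem_nhdsWithin (Icc_mem_nhdsGE_of_mem ⟨le_rfl, hτ.2⟩)
  have hbound : ∀ τ ∈ Ico (0:ℝ) T, ‖d τ‖ ≤ L * ‖g τ‖ + 0 := by
    intro τ hτ
    have hφτ : φ τ ∈ Icc (0:ℝ) T := hmaps τ ⟨hτ.1, hτ.2.le⟩
    have hPb : |P (φ τ)| ≤ C := by simpa [Real.norm_eq_abs] using hC _ hφτ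
    have hQb : |Q (φ τ)| ≤ C' := by simpa [Real.norm_eq_abs] using hC' _ hφτ
    have hfac : |(-2 * a + k * (Q (φ τ) + P (φ τ)))| ≤ L := by
      calc |(-2 * a + k * (Q (φ τ) + P (φ τ)))|
          ≤ |(-2 * a)| + |k * (Q (φ τ) + P (φ τ))| := abs_add_le _ _
        _ = 2 * |a| + |k| * |Q (φ τ) + P (φ τ)| := by
            rw [show (-2 * a : ℝ) = -(2 * a) by ring, abs_neg, abs_mul, abs_mul]
            norm_num
        _ ≤ 2 * |a| + |k| * (C + C') := by
            have h5 : |Q (φ τ) + P (φ τ)| ≤ C + C' := by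
              calc |Q (φ τ) + P (φ τ)| ≤ |Q (φ τ)| + |P (φ τ)| := abs_add_le _ _
                _ ≤ C + C' := by linarith
            have := mul_le_mul_of_nonneg_left h5 (abs_nonneg k)
            linarith
        _ = L := rfl
    have hdeq : d τ = (Q (φ τ) - P (φ τ)) * (-2 * a + k * (Q (φ τ) + P (φ τ))) := by
      simp only [d]; ring
    rw [Real.norm_eq_abs, Real.norm_eq_abs, add_zero, hdeq, abs_mul]
    calc |Q (φ τ) - P (φ τ)| * |(-2 * a + k * (Q (φ τ) + P (φ τ)))|
        ≤ |Q (φ τ) - P (φ τ)| * L := mul_le_mul_of_nonneg_left hfac (abs_nonneg _)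
      _ = L * |P (φ τ) - Q (φ τ)| := by rw [abs_sub_comm]; ring
  have key := norm_le_gronwallBound_of_norm_deriv_right_le hgc hderiv hg0 hbound
  intro t ht
  have hτmem : T - t ∈ Icc (0:ℝ) T := ⟨by linarith [ht.2], by linarith [ht.1]⟩
  have := key (T - t) hτmem
  rw [gronwallBound_ε0_δ0] at this
  have hgt : g (T - t) = 0 := by
    have := norm_nonneg (g (T - t))
    have h := le_antisymm ‹‖g (T - t)‖ ≤ 0› this
    exact norm_eq_zero.mp (le_antisymm ‹‖g (T - t)‖ ≤ 0› (norm_nonneg _))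
  have : P (T - (T - t)) - Q (T - (T - t)) = 0 := hgt
  simp only [sub_sub_cancel] at this
  linarith

/-- The scalar Riccati ODE `P'(t) = -2aP(t) + (b²/r)P(t)² - q` on `[0,T]` with
terminal condition `P(T) = f`, where `q, r, f > 0` and `b ≠ 0`, admits a unique solution on
`[0,T]`, and this solution is strictly positive on `[0,T]`. -/
theorem riccati_backward_exists_unique_pos
    (T a b r q f : ℝ) (hT : 0 < T) (hb : b ≠ 0)
    (hq : 0 < q) (hr : 0 < r) (hf : 0 < f) :
    ∃ P : ℝ → ℝ,
      (∀ t ∈ Icc 0 T,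
          HasDerivWithinAt P (-2 * a * P t + (b ^ 2 / r) * (P t) ^ 2 - q) (Icc 0 T) t) ∧
      P T = f ∧
      (∀ t ∈ Icc 0 T, 0 < P t) ∧
      (∀ Q : ℝ → ℝ,
        (∀ t ∈ Icc 0 T,
            HasDerivWithinAt Q (-2 * a * Q t + (b ^ 2 / r) * (Q t) ^ 2 - q) (Icc 0 T) t) →
        Q T = f → EqOn P Q (Icc 0 T)) := by
  set k : ℝ := b ^ 2 / r with hkdef
  have hk : 0 < k := div_pos (by positivity) hr
  have hkq : 0 < a ^ 2 + k * q := by nlinarith [sq_nonneg a, mul_pos hk hq]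
  set s : ℝ := Real.sqrt (a ^ 2 + k * q) with hsdef
  have hs2 : s ^ 2 = a ^ 2 + k * q := Real.sq_sqrt hkq.le
  have hs : 0 < s := Real.sqrt_pos.2 hkq
  have h1 : a - s < 0 := by nlinarith [mul_pos hk hq]
  have h2 : 0 < a + s := by nlinarith [mul_pos hk hq]
  set xp : ℝ := (a + s) / k with hxpdef
  set xm : ℝ := (a - s) / k with hxmdef
  have hxp : 0 < xp := div_pos h2 hk
  have hxm : xm < 0 := div_neg_of_neg_of_pos h1 hk
  have hxpm : xm < xp := by
    rw [hxpdef, hxmdef, div_lt_div_iff_of_pos_right hk]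
    linarith
  have hfm : 0 < f - xm := by linarith
  set c : ℝ := (f - xp) / (f - xm) with hcdef
  have hc1 : c < 1 := by
    rw [hcdef, div_lt_one hfm]
    linarith
  set u : ℝ → ℝ := fun t => c * Real.exp (2 * s * (t - T)) with hudef
  have hue : ∀ t, t ≤ T → Real.exp (2 * s * (t - T)) ≤ 1 := by
    intro t htT
    rw [Real.exp_le_one_iff]
    nlinarith
  have hu1 : ∀ t, t ≤ T → u t < 1 := by
    intro t htT
    rcases le_or_gt 0 c with hc0 | hc0
    · have := mul_le_of_le_one_right hc0 (hue t htT)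
      simp only [hudef]; linarith
    · have := mul_neg_of_neg_of_pos hc0 (Real.exp_pos (2 * s * (t - T)))
      simp only [hudef]; linarith
  have hden : ∀ t, t ≤ T → 0 < 1 - u t := fun t ht => by linarith [hu1 t ht]
  have hkey : xp - xm * c = f * (xp - xm) / (f - xm) := by
    rw [hcdef]; field_simp; ring
  have hnum : ∀ t, t ≤ T → 0 < xp - xm * u t := by
    intro t htT
    rcases le_or_gt 0 c with hc0 | hc0
    · have hu0 : 0 ≤ u t := mul_nonneg hc0 (Real.exp_pos _).le
      nlinarith
    · have huc : c ≤ u t := by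
        have := mul_le_mul_of_nonpos_left (hue t htT) hc0.le
        simpa [hudef] using this
      have hxmc : 0 < xp - xm * c := by
        rw [hkey]
        exact div_pos (mul_pos hf (by linarith)) hfm
      nlinarith
  set P : ℝ → ℝ := fun t => (xp - xm * u t) / (1 - u t) with hPdef
  have hqeq : q = (s ^ 2 - a ^ 2) / k := by
    rw [hs2]; field_simp; ring
  have hsol : ∀ t ∈ Icc 0 T,
      HasDerivWithinAt P (-2 * a * P t + k * (P t) ^ 2 - q) (Icc 0 T) t := by
    intro t ht
    have hu' : HasDerivAt u (2 * s * u t) t := by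
      have hlin : HasDerivAt (fun x : ℝ => 2 * s * (x - T)) (2 * s) t := by
        simpa using ((hasDerivAt_id t).sub_const T).const_mul (2 * s)
      have := (hlin.exp).const_mul c
      exact this.congr_deriv (by simp only [hudef]; ring)
    have hd1 : HasDerivAt (fun x => xp - xm * u x) (-(xm * (2 * s * u t))) t :=
      (hu'.const_mul xm).const_sub xp
    have hd2 : HasDerivAt (fun x => 1 - u x) (-(2 * s * u t)) t := hu'.const_sub 1
    have hne : 1 - u t ≠ 0 := ne_of_gt (hden t ht.2)
    have hP' := hd1.div hd2 hne
    have heq : -2 * a * P t + k * (P t) ^ 2 - q =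
        (-(xm * (2 * s * u t)) * (1 - u t) - (xp - xm * u t) * -(2 * s * u t)) /
          (1 - u t) ^ 2 := by
      simp only [hPdef, hxpdef, hxmdef]
      exact riccati_algebra a s k q (u t) hk.ne' hne hs2
    rw [heq]
    exact hP'.hasDerivWithinAt
  have hPT : P T = f := by
    have huT : u T = c := by simp [hudef]
    have h1c : (0:ℝ) < 1 - c := by linarith
    rw [hPdef]
    simp only [huT]
    rw [div_eq_iff (ne_of_gt h1c), hcdef]
    field_simp
    ring
  refine ⟨P, ?_, hPT, ?_, ?_⟩
  · intro t ht
    have := hsol t ht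
    rwa [hkdef] at this
  · intro t ht
    exact div_pos (hnum t ht.2) (hden t ht.2)
  · intro Q hQ hQT
    exact riccati_uniqueness T a k q hT P Q hsol (fun t ht => hQ t ht) (by rw [hPT, hQT])
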